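/- If X_1, ..., X_n are i.i.d. copies of a mean-zero random variable X with finite p-th moment for some p ∈ [1, 2], then ‖X_1 + ... + X_n‖_p ≤ (2n)^{1/p} · ‖X‖_p, where ‖·‖_p denotes the L^p norm. -/

import Mathlib

open MeasureTheory ProbabilityTheory Finset

open Real


-- subadditivity of rpow for exponent in [0,1]
lemma rpow_subadd {q : ℝ} (hq0 : 0 ≤ q) (hq1 : q ≤ 1) {x y : ℝ} (hx : 0 ≤ x) (hy : 0 ≤ y) :
    (x + y) ^ q ≤ x ^ q + y ^ q := by
  have h := NNReal.rpow_add_le_add_rpow x.toNNReal y.toNNReal hq0 hq1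
  rw [← NNReal.coe_le_coe] at h
  rw [NNReal.coe_add, NNReal.coe_rpow, NNReal.coe_rpow, NNReal.coe_rpow, NNReal.coe_add,
    Real.coe_toNNReal _ hx, Real.coe_toNNReal _ hy] at h
  exact h

-- tangent line inequality for convex rpow
lemma rpow_tangent {p : ℝ} (hp : 1 ≤ p) {x y : ℝ} (hx : 0 ≤ x) (hy : 0 < y) :
    y ^ p + p * y ^ (p - 1) * (x - y) ≤ x ^ p := by
  have hs : -1 ≤ x / y - 1 := by
    have : 0 ≤ x / y := div_nonneg hx hy.le
    linarith
  have hb := one_add_mul_self_le_rpow_one_add hs hp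
  have h1 : (1 + (x / y - 1)) = x / y := by ring
  rw [h1, Real.div_rpow hx hy.le] at hb
  have hyp : (0:ℝ) < y ^ p := Real.rpow_pos_of_pos hy p
  have hb2 : (1 + p * (x / y - 1)) * y ^ p ≤ x ^ p := by
    calc (1 + p * (x / y - 1)) * y ^ p ≤ (x ^ p / y ^ p) * y ^ p := by
          exact mul_le_mul_of_nonneg_right hb hyp.le
      _ = x ^ p := by field_simp
  have hyp1 : y ^ (p - 1) = y ^ p / y := by
    rw [Real.rpow_sub hy, Real.rpow_one]
  calc y ^ p + p * y ^ (p - 1) * (x - y)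
      = (1 + p * (x / y - 1)) * y ^ p := by
        rw [hyp1]; field_simp
    _ ≤ x ^ p := hb2


lemma young_aux {p : ℝ} (hp : 1 < p) {a c : ℝ} (ha : 0 ≤ a) (hc : 0 ≤ c) :
    p * (a ^ (p - 1) * c) ≤ (p - 1) * a ^ p + c ^ p := by
  have hpq : (p / (p - 1)).HolderConjugate p := (Real.HolderConjugate.conjExponent hp).symm
  have hy := Real.young_inequality_of_nonneg (a := a ^ (p - 1)) (b := c)
    (Real.rpow_nonneg ha _) hc hpq
  have h1 : (a ^ (p - 1)) ^ (p / (p - 1)) = a ^ p := by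
    rw [← Real.rpow_mul ha]
    congr 1
    have : p - 1 ≠ 0 := by nlinarith
    field_simp
  rw [h1] at hy
  have hp0 : (0:ℝ) < p := by linarith
  have hp1 : (0:ℝ) < p - 1 := by linarith
  have h2 : a ^ p / (p / (p - 1)) = (p - 1) / p * a ^ p := by
    rw [div_div_eq_mul_div]
    ring
  rw [h2] at hy
  have := mul_le_mul_of_nonneg_left hy hp0.le
  calc p * (a ^ (p - 1) * c) ≤ p * ((p - 1) / p * a ^ p + c ^ p / p) := this
    _ = (p - 1) * a ^ p + c ^ p := by
        field_simp

lemma key_pos {p : ℝ} (hp : 1 < p) (hp2 : p ≤ 2) {a : ℝ} (ha : 0 < a) (b : ℝ) :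
    |a + b| ^ p ≤ a ^ p + p * a ^ (p - 1) * b + 2 * |b| ^ p := by
  have hp1 : (0:ℝ) ≤ p - 1 := by linarith
  have hq1 : p - 1 ≤ 1 := by linarith
  have hp0 : (0:ℝ) < p := by linarith
  rcases le_or_gt 0 b with hb | hb
  · -- b ≥ 0
    rcases eq_or_lt_of_le hb with rfl | hb
    · simp [abs_of_pos ha, Real.zero_rpow hp0.ne', abs_of_nonneg, le_of_lt ha]
    · have habs : |a + b| = a + b := abs_of_pos (by linarith)
      have hbabs : |b| = b := abs_of_pos hb
      have ht := rpow_tangent hp.le ha.le (show (0:ℝ) < a + b by linarith)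
      -- a^p ≥ (a+b)^p + p (a+b)^(p-1) (a - (a+b))
      have hsub := rpow_subadd hp1 hq1 ha.le hb.le
      have hbp : b ^ (p - 1) * b = b ^ p := by
        rw [← Real.rpow_add_one hb.ne']; ring_nf
      have hbpos : (0:ℝ) ≤ b ^ p := Real.rpow_nonneg hb.le p
      rw [habs, hbabs]
      have h3 : (a + b) ^ p ≤ a ^ p + p * (a + b) ^ (p - 1) * b := by nlinarith
      have h4 : p * (a + b) ^ (p - 1) * b ≤ p * (a ^ (p - 1) + b ^ (p - 1)) * b := by
        have := mul_le_mul_of_nonneg_left hsub hp0.le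
        nlinarith
      nlinarith
  · -- b < 0; write c = -b > 0
    set c : ℝ := -b with hc
    have hc0 : 0 < c := by simp [hc]; linarith
    have hbabs : |b| = c := by rw [abs_of_neg hb]
    rcases le_or_gt a c with hac | hca
    · -- c ≥ a : |a + b| = c - a
      have habs : |a + b| = c - a := by
        rw [show a + b = -(c - a) by rw [hc]; ring, abs_neg, abs_of_nonneg (by linarith)]
      rw [habs, hbabs]
      have h1 : (c - a) ^ p ≤ c ^ (p - 1) * (c - a) := by
        rcases eq_or_lt_of_le hac with rfl | hac'
        · simp [Real.zero_rpow hp0.ne']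
        · have : (c - a) ^ p = (c - a) ^ (p - 1) * (c - a) := by
            rw [← Real.rpow_add_one (by linarith : c - a ≠ 0)]; ring_nf
          rw [this]
          have h2 : (c - a) ^ (p - 1) ≤ c ^ (p - 1) :=
            Real.rpow_le_rpow (by linarith) (by linarith) hp1
          exact mul_le_mul_of_nonneg_right h2 (by linarith)
      have h2 : c ^ (p - 1) * c = c ^ p := by
        rw [← Real.rpow_add_one hc0.ne']; ring_nf
      have hy := young_aux hp ha.le hc0.le
      have hap : (0:ℝ) ≤ a ^ p := Real.rpow_nonneg ha.le p
      have hacp : (0:ℝ) ≤ a * c ^ (p - 1) :=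
        mul_nonneg ha.le (Real.rpow_nonneg hc0.le _)
      have hcp1 : (0:ℝ) ≤ c ^ (p - 1) := Real.rpow_nonneg hc0.le _
      have hb' : b = -c := by rw [hc]; ring
      rw [hb']
      nlinarith [mul_nonneg (by linarith : (0:ℝ) ≤ 2 - p) hap]
    · -- c < a : |a + b| = a - c
      have habs : |a + b| = a - c := by
        rw [show a + b = a - c by rw [hc]; ring, abs_of_pos (by linarith)]
      rw [habs, hbabs]
      have ht := rpow_tangent hp.le ha.le (show (0:ℝ) < a - c by linarith)
      -- a^p ≥ (a-c)^p + p (a-c)^(p-1) c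
      have hsub := rpow_subadd hp1 hq1 (by linarith : (0:ℝ) ≤ a - c) hc0.le
      rw [show a - c + c = a by ring] at hsub
      have h2 : c ^ (p - 1) * c = c ^ p := by
        rw [← Real.rpow_add_one hc0.ne']; ring_nf
      have hcp : (0:ℝ) ≤ c ^ p := Real.rpow_nonneg hc0.le p
      have hb' : b = -c := by rw [hc]; ring
      rw [hb']
      have h2' : p * (c ^ (p - 1) * c) = p * c ^ p := by rw [h2]
      nlinarith [mul_le_mul_of_nonneg_left hsub (mul_nonneg hp0.le hc0.le),
        mul_nonneg (by linarith : (0:ℝ) ≤ 2 - p) hcp, h2']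

lemma key_ineq {p : ℝ} (hp1 : 1 ≤ p) (hp2 : p ≤ 2) (a b : ℝ) :
    |a + b| ^ p ≤ |a| ^ p + p * (Real.sign a * |a| ^ (p - 1)) * b + 2 * |b| ^ p := by
  rcases eq_or_lt_of_le hp1 with rfl | hp
  · -- p = 1
    simp only [Real.rpow_one, sub_self, Real.rpow_zero, mul_one]
    have h1 := abs_add_le a b
    have h2 : -(|b|) ≤ Real.sign a * b := by
      rcases lt_trichotomy a 0 with h | h | h
      · rw [Real.sign_of_neg h]; linarith [le_abs_self b]
      · simp [h, Real.sign_zero, abs_nonneg]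
      · rw [Real.sign_of_pos h]; linarith [neg_abs_le b]
    linarith [abs_nonneg b]
  · rcases lt_trichotomy a 0 with ha | rfl | ha
    · have h := key_pos hp hp2 (neg_pos.2 ha) (-b)
      rw [show -a + -b = -(a + b) by ring, abs_neg, abs_neg] at h
      rw [Real.sign_of_neg ha, abs_of_neg ha]
      calc |a + b| ^ p ≤ (-a) ^ p + p * (-a) ^ (p - 1) * (-b) + 2 * |b| ^ p := h
        _ = (-a) ^ p + p * (-1 * (-a) ^ (p - 1)) * b + 2 * |b| ^ p := by ring
    · simp [Real.sign_zero, Real.zero_rpow (by linarith : p ≠ 0), abs_nonneg,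
        le_add_iff_nonneg_left, Real.rpow_nonneg (abs_nonneg b)]
      nlinarith [Real.rpow_nonneg (abs_nonneg b) p]
    · have h := key_pos hp hp2 ha b
      rw [Real.sign_of_pos ha, abs_of_pos ha]
      simpa using h


lemma measurable_real_sign : Measurable Real.sign := by
  have h : Real.sign = fun r : ℝ => if r < 0 then (-1:ℝ) else if 0 < r then 1 else 0 := by
    funext r; rfl
  rw [h]
  exact Measurable.ite measurableSet_Iio measurable_const
    (Measurable.ite measurableSet_Ioi measurable_const measurable_const)

lemma vbe_step {Ω : Type*} [MeasurableSpace Ω] (μ : Measure Ω) [IsProbabilityMeasure μ]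
    {p : ℝ} (hp1 : 1 ≤ p) (hp2 : p ≤ 2) {S Y : Ω → ℝ}
    (hS : MemLp S (ENNReal.ofReal p) μ) (hY : MemLp Y (ENNReal.ofReal p) μ)
    (hind : IndepFun S Y μ) (hYmean : ∫ ω, Y ω ∂μ = 0) :
    ∫ ω, |S ω + Y ω| ^ p ∂μ ≤ ∫ ω, |S ω| ^ p ∂μ + 2 * ∫ ω, |Y ω| ^ p ∂μ := by
  have hp0 : (0:ℝ) < p := by linarith
  have hpne : ENNReal.ofReal p ≠ 0 := by simp [ENNReal.ofReal_eq_zero]; linarith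
  have hptop : ENNReal.ofReal p ≠ ⊤ := ENNReal.ofReal_ne_top
  have htoReal : (ENNReal.ofReal p).toReal = p := ENNReal.toReal_ofReal hp0.le
  have habs : ∀ (f : Ω → ℝ), MemLp f (ENNReal.ofReal p) μ →
      Integrable (fun ω => |f ω| ^ p) μ := by
    intro f hf
    have := hf.integrable_norm_rpow hpne hptop
    simpa [htoReal, Real.norm_eq_abs] using this
  have hintS : Integrable (fun ω => |S ω| ^ p) μ := habs S hS
  have hintY : Integrable (fun ω => |Y ω| ^ p) μ := habs Y hY
  have hintSY : Integrable (fun ω => |S ω + Y ω| ^ p) μ := by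
    have := habs (S + Y) (hS.add hY)
    simpa using this
  -- the function f t = sign t * |t|^(p-1)
  set f : ℝ → ℝ := fun t => Real.sign t * |t| ^ (p - 1) with hf
  have hfmeas : Measurable f :=
    measurable_real_sign.mul (measurable_abs.pow_const _)
  have hfS_meas : AEStronglyMeasurable (fun ω => f (S ω)) μ :=
    (hfmeas.comp_aemeasurable hS.aestronglyMeasurable.aemeasurable).aestronglyMeasurable
  have hfS_int : Integrable (fun ω => f (S ω)) μ := by
    refine Integrable.mono' ((integrable_const (1:ℝ)).add hintS) hfS_meas ?_
    filter_upwards with ω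
    have h1 : ‖f (S ω)‖ ≤ |S ω| ^ (p - 1) := by
      rw [hf]
      simp only [Real.norm_eq_abs, abs_mul]
      have : |Real.sign (S ω)| ≤ 1 := by
        rcases Real.sign_apply_eq (S ω) with h | h | h <;> rw [h] <;> norm_num
      calc |Real.sign (S ω)| * abs (|S ω| ^ (p - 1))
          ≤ 1 * abs (|S ω| ^ (p - 1)) :=
            mul_le_mul_of_nonneg_right this (abs_nonneg _)
        _ = |S ω| ^ (p - 1) := by
            rw [one_mul, abs_of_nonneg (Real.rpow_nonneg (abs_nonneg _) _)]
    refine h1.trans ?_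
    rcases le_or_gt (|S ω|) 1 with h | h
    · have : |S ω| ^ (p - 1) ≤ 1 := Real.rpow_le_one (abs_nonneg _) h (by linarith)
      have h2 : (0:ℝ) ≤ |S ω| ^ p := Real.rpow_nonneg (abs_nonneg _) _
      simp only [Pi.add_apply]; linarith
    · have : |S ω| ^ (p - 1) ≤ |S ω| ^ p :=
        Real.rpow_le_rpow_of_exponent_le h.le (by linarith)
      simp only [Pi.add_apply]; linarith
  have hYint : Integrable Y μ := hY.integrable (by
    rw [ENNReal.one_le_ofReal]; exact hp1)
  have hprod_int : Integrable (fun ω => f (S ω) * Y ω) μ := by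
    have := (hind.comp hfmeas measurable_id).integrable_mul hfS_int hYint
    exact this
  have hprod : ∫ ω, f (S ω) * Y ω ∂μ = 0 := by
    have := (hind.comp hfmeas measurable_id).integral_fun_mul_eq_mul_integral hfS_meas
      hYint.aestronglyMeasurable
    calc ∫ ω, f (S ω) * Y ω ∂μ = (∫ ω, f (S ω) ∂μ) * ∫ ω, Y ω ∂μ := this
      _ = 0 := by rw [hYmean, mul_zero]
  have e1 : Integrable (fun ω => p * f (S ω) * Y ω) μ :=
    (hprod_int.const_mul p).congr (Filter.Eventually.of_forall fun ω => by ring)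
  have e12 : Integrable (fun ω => |S ω| ^ p + p * f (S ω) * Y ω) μ := hintS.add e1
  have e3 : Integrable (fun ω => 2 * |Y ω| ^ p) μ := hintY.const_mul 2
  have hmono : ∫ ω, |S ω + Y ω| ^ p ∂μ ≤
      ∫ ω, (|S ω| ^ p + p * (f (S ω)) * Y ω + 2 * |Y ω| ^ p) ∂μ := by
    refine integral_mono hintSY (e12.add e3) ?_
    intro ω
    exact key_ineq hp1 hp2 (S ω) (Y ω)
  have e4 : ∫ ω, p * f (S ω) * Y ω ∂μ = p * ∫ ω, f (S ω) * Y ω ∂μ := by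
    rw [← integral_const_mul]
    exact integral_congr_ae (Filter.Eventually.of_forall fun ω => by ring)
  calc ∫ ω, |S ω + Y ω| ^ p ∂μ
      ≤ ∫ ω, (|S ω| ^ p + p * (f (S ω)) * Y ω + 2 * |Y ω| ^ p) ∂μ := hmono
    _ = (∫ ω, |S ω| ^ p ∂μ) + p * (∫ ω, f (S ω) * Y ω ∂μ) + 2 * ∫ ω, |Y ω| ^ p ∂μ := by
        rw [integral_add e12 e3, integral_add hintS e1, e4, integral_const_mul]
    _ = (∫ ω, |S ω| ^ p ∂μ) + 2 * ∫ ω, |Y ω| ^ p ∂μ := by rw [hprod]; ring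

lemma iIndepFun_congr_ae {Ω ι : Type*} [Countable ι] [MeasurableSpace Ω] {μ : Measure Ω}
    {f g : ι → Ω → ℝ} (h : iIndepFun f μ)
    (h' : ∀ i, f i =ᵐ[μ] g i) : iIndepFun g μ := by
  rw [iIndepFun_iff_measure_inter_preimage_eq_mul] at h ⊢
  intro S sets hsets
  have hae : ∀ᵐ ω ∂μ, ∀ i, f i ω = g i ω := ae_all_iff.2 h'
  have h1 : μ (⋂ i ∈ S, g i ⁻¹' sets i) = μ (⋂ i ∈ S, f i ⁻¹' sets i) := by
    refine measure_congr ?_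
    rw [Filter.eventuallyEq_set]
    filter_upwards [hae] with ω hω
    simp only [Set.mem_iInter, Set.mem_preimage]
    constructor <;> intro hh i hi
    · rw [hω i]; exact hh i hi
    · rw [← hω i]; exact hh i hi
  have h2 : ∀ i ∈ S, μ (g i ⁻¹' sets i) = μ (f i ⁻¹' sets i) := by
    intro i _
    refine measure_congr ?_
    rw [Filter.eventuallyEq_set]
    filter_upwards [h' i] with ω hω
    simp only [Set.mem_preimage, hω]
  rw [h1, h S hsets]
  exact (Finset.prod_congr rfl h2).symm

/-- If `X_1, ..., X_n` are i.i.d. copies of a mean-zero random variable `X` with finite `p`-th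
moment for `p ∈ [1,2]`, then `‖X_1 + ... + X_n‖_p ≤ (2n)^(1/p) * ‖X‖_p`. -/
theorem iid_sum_Lp_bound {Ω : Type*} [MeasurableSpace Ω] (μ : Measure Ω)
    [IsProbabilityMeasure μ] (n : ℕ) (X : Ω → ℝ) (Xs : Fin n → Ω → ℝ)
    (hindep : iIndepFun Xs μ)
    (hident : ∀ i, IdentDistrib (Xs i) X μ μ)
    (hmean : ∫ ω, X ω ∂μ = 0)
    (p : ℝ) (hp1 : 1 ≤ p) (hp2 : p ≤ 2)
    (hX : MemLp X (ENNReal.ofReal p) μ) :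
    (∫ ω, |∑ i, Xs i ω| ^ p ∂μ) ^ (1 / p) ≤
      (2 * n) ^ (1 / p) * (∫ ω, |X ω| ^ p ∂μ) ^ (1 / p) := by
  have hp0 : (0:ℝ) < p := by linarith
  -- measurable modifications
  set Ys : Fin n → Ω → ℝ := fun i => AEMeasurable.mk (Xs i) (hident i).aemeasurable_fst
    with hYs
  have hYs_meas : ∀ i, Measurable (Ys i) := fun i =>
    (hident i).aemeasurable_fst.measurable_mk
  have hYs_eq : ∀ i, Xs i =ᵐ[μ] Ys i := fun i => (hident i).aemeasurable_fst.ae_eq_mk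
  have hYindep : iIndepFun Ys μ :=
    iIndepFun_congr_ae hindep hYs_eq
  have hYident : ∀ i, IdentDistrib (Ys i) X μ μ := fun i =>
    { aemeasurable_fst := (hYs_meas i).aemeasurable
      aemeasurable_snd := (hident i).aemeasurable_snd
      map_eq := by
        rw [← Measure.map_congr (hYs_eq i)]
        exact (hident i).map_eq }
  have hYmem : ∀ i, MemLp (Ys i) (ENNReal.ofReal p) μ := fun i =>
    (hYident i).symm.memLp_snd hX
  have hYmean : ∀ i, ∫ ω, Ys i ω ∂μ = 0 := fun i => by
    rw [(hYident i).integral_eq]; exact hmean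
  have hmoment : ∀ i, ∫ ω, |Ys i ω| ^ p ∂μ = ∫ ω, |X ω| ^ p ∂μ := fun i => by
    have := ((hYident i).comp (u := fun t : ℝ => |t| ^ p)
      (measurable_abs.pow_const p)).integral_eq
    simpa [Function.comp] using this
  have hM0 : 0 ≤ ∫ ω, |X ω| ^ p ∂μ :=
    integral_nonneg fun ω => Real.rpow_nonneg (abs_nonneg _) _
  -- main induction over finsets
  have main : ∀ s : Finset (Fin n),
      ∫ ω, |∑ i ∈ s, Ys i ω| ^ p ∂μ ≤ 2 * s.card * ∫ ω, |X ω| ^ p ∂μ := by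
    intro s
    induction s using Finset.induction_on with
    | empty =>
      simp [Real.zero_rpow hp0.ne']
    | @insert j s hj ih =>
      have hSmem : MemLp (fun ω => ∑ i ∈ s, Ys i ω) (ENNReal.ofReal p) μ := by
        have := memLp_finset_sum' s fun i (_ : i ∈ s) => hYmem i
        have heq : (∑ i ∈ s, Ys i) = fun ω => ∑ i ∈ s, Ys i ω := by
          funext ω; simp [Finset.sum_apply]
        rwa [heq] at this
      have hind : IndepFun (fun ω => ∑ i ∈ s, Ys i ω) (Ys j) μ := by
        have := hYindep.indepFun_finsetSum_of_notMem hYs_meas hj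
        have heq : (∑ i ∈ s, Ys i) = fun ω => ∑ i ∈ s, Ys i ω := by
          funext ω; simp [Finset.sum_apply]
        rwa [heq] at this
      have hstep := vbe_step μ hp1 hp2 hSmem (hYmem j) hind (hYmean j)
      have hsum_eq : ∀ ω, ∑ i ∈ insert j s, Ys i ω = (∑ i ∈ s, Ys i ω) + Ys j ω := by
        intro ω; rw [Finset.sum_insert hj]; ring
      calc ∫ ω, |∑ i ∈ insert j s, Ys i ω| ^ p ∂μ
          = ∫ ω, |(∑ i ∈ s, Ys i ω) + Ys j ω| ^ p ∂μ := by
            exact integral_congr_ae (Filter.Eventually.of_forall fun ω => by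
              simp only [hsum_eq])
        _ ≤ (∫ ω, |∑ i ∈ s, Ys i ω| ^ p ∂μ) + 2 * ∫ ω, |Ys j ω| ^ p ∂μ := hstep
        _ ≤ 2 * s.card * (∫ ω, |X ω| ^ p ∂μ) + 2 * ∫ ω, |X ω| ^ p ∂μ := by
            rw [hmoment j]; linarith
        _ = 2 * (insert j s).card * ∫ ω, |X ω| ^ p ∂μ := by
            rw [Finset.card_insert_of_notMem hj]
            push_cast
            ring
  have hfinal := main Finset.univ
  rw [Finset.card_univ, Fintype.card_fin] at hfinal
  have hXsYs : ∫ ω, |∑ i, Xs i ω| ^ p ∂μ = ∫ ω, |∑ i, Ys i ω| ^ p ∂μ := by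
    refine integral_congr_ae ?_
    filter_upwards [ae_all_iff.2 hYs_eq] with ω hω
    simp only [hω]
  have hL0 : 0 ≤ ∫ ω, |∑ i, Ys i ω| ^ p ∂μ :=
    integral_nonneg fun ω => Real.rpow_nonneg (abs_nonneg _) _
  rw [hXsYs]
  calc (∫ ω, |∑ i, Ys i ω| ^ p ∂μ) ^ (1 / p)
      ≤ (2 * n * ∫ ω, |X ω| ^ p ∂μ) ^ (1 / p) :=
        Real.rpow_le_rpow hL0 hfinal (by positivity)
    _ = (2 * n) ^ (1 / p) * (∫ ω, |X ω| ^ p ∂μ) ^ (1 / p) :=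
        Real.mul_rpow (by positivity) hM0
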